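/- Under the interference-alignment hypotheses, for every nonempty subset X ⊆ {1,…,k}, the r matrices I, Σ_{j∈X} C_{2,j}, Σ_{j∈X} C_{3,j}, …, Σ_{j∈X} C_{r,j} form a linearly independent family in the 𝔽-vector space of l × l matrices over 𝔽. -/

import Mathlib

theorem stmt_6 {𝔽 : Type*} [Field 𝔽] (k r l : ℕ)
    (hk : 0 < k) (hr : 2 ≤ r) (hl : 0 < l) (hrl : r ∣ l)
    (S : Fin k → Matrix (Fin (l / r)) (Fin l) 𝔽)
    (C : Fin r → Fin k → Matrix (Fin l) (Fin l) 𝔽)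
    (hCinv : ∀ u j, IsUnit (C u j))
    (hC1 : ∀ j, C ⟨0, by omega⟩ j = 1)
    (hIA1 : ∀ (i j : Fin k), j ≠ i → ∀ u : Fin r,
      Submodule.span 𝔽 (Set.range (S i * C u j)) = Submodule.span 𝔽 (Set.range (S i)))
    (hIA2 : ∀ i : Fin k, iSupIndep
      fun u : Fin r => Submodule.span 𝔽 (Set.range (S i * C u i)))
    (hIA3 : ∀ i : Fin k,
      (⨆ u : Fin r, Submodule.span 𝔽 (Set.range (S i * C u i))) = ⊤)
    (X : Finset (Fin k)) (hX : X.Nonempty) :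
    LinearIndependent 𝔽
      (fun u : Fin r =>
        if (u : ℕ) = 0 then (1 : Matrix (Fin l) (Fin l) 𝔽)
        else ∑ j ∈ X, C u j) := by
  classical
  rw [Fintype.linearIndependent_iff]
  intro g hg
  obtain ⟨i, hi⟩ := hX
  have hr0 : 0 < r := by omega
  set u0 : Fin r := ⟨0, hr0⟩ with hu0def
  set V : Fin r → Submodule 𝔽 (Fin l → 𝔽) :=
    fun u => Submodule.span 𝔽 (Set.range (S i * C u i)) with hVdef
  have hC1' : ∀ j, C u0 j = 1 := hC1
  haveI : Nonempty (Fin l) := ⟨⟨0, hl⟩⟩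
  -- S i ≠ 0
  have hS : S i ≠ 0 := by
    intro h
    have htop := hIA3 i
    have hbot : ∀ u : Fin r, Submodule.span 𝔽 (Set.range (S i * C u i)) = ⊥ := by
      intro u
      rw [h, Matrix.zero_mul, Submodule.span_eq_bot]
      rintro x ⟨b, rfl⟩
      rfl
    simp only [hbot, iSup_const] at htop
    exact absurd htop.symm (by simp)
  -- matrix-level equation with the `if` resolved
  have h0 : g u0 • S i + ∑ v ∈ Finset.univ.erase u0, g v • ∑ j ∈ X, (S i * C v j) = 0 := by
    have h1 : S i * (∑ v : Fin r, g v • (if (v : ℕ) = 0 then (1 : Matrix (Fin l) (Fin l) 𝔽)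
        else ∑ j ∈ X, C v j)) = 0 := by rw [hg, Matrix.mul_zero]
    rw [Matrix.mul_sum] at h1
    simp only [Matrix.mul_smul] at h1
    rw [← Finset.add_sum_erase _ _ (Finset.mem_univ u0)] at h1
    rw [if_pos rfl, Matrix.mul_one] at h1
    rw [← h1]
    congr 1
    apply Finset.sum_congr rfl
    intro v hv
    have hvne : (v : ℕ) ≠ 0 := by
      intro hc
      exact (Finset.mem_erase.mp hv).1 (Fin.ext hc)
    rw [if_neg hvne, Matrix.mul_sum]
  -- per-row equation
  have hmain : ∀ b, g u0 • S i b + ∑ v ∈ Finset.univ.erase u0, g v • ∑ j ∈ X, (S i * C v j) b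
      = 0 := by
    intro b
    funext c
    have h2 := congrFun (congrFun h0 b) c
    simp only [Matrix.add_apply, Matrix.smul_apply, Matrix.sum_apply, Finset.sum_apply,
      Pi.add_apply, Pi.smul_apply, smul_eq_mul, Matrix.zero_apply, Pi.zero_apply] at h2 ⊢
    exact h2
  -- key: g v = 0 for v ≠ u0
  have hgz : ∀ v : Fin r, v ≠ u0 → g v = 0 := by
    intro v hv
    by_contra hgv
    have hrowz : ∀ b, g v • (S i * C v i) b = 0 := by
      intro b
      set F : Fin r → (Fin l → 𝔽) := fun w =>
        if w = u0 then g u0 • S i b + ∑ w' ∈ Finset.univ.erase u0,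
            g w' • ∑ j ∈ X.erase i, (S i * C w' j) b
        else g w • (S i * C w i) b with hFdef
      have hFmem : ∀ w, F w ∈ V w := by
        intro w
        by_cases hw : w = u0
        · rw [hFdef]; simp only [hw, if_pos rfl]
          have hVu0 : V u0 = Submodule.span 𝔽 (Set.range (S i)) := by
            rw [hVdef]; simp only [hC1' i, Matrix.mul_one]
          rw [hVu0]
          apply Submodule.add_mem
          · exact Submodule.smul_mem _ _ (Submodule.subset_span ⟨b, rfl⟩)
          · apply Submodule.sum_mem
            intro w' _
            apply Submodule.smul_mem
            apply Submodule.sum_mem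
            intro j hj
            have hji : j ≠ i := (Finset.mem_erase.mp hj).1
            rw [← hIA1 i j hji w']
            exact Submodule.subset_span ⟨b, rfl⟩
        · rw [hFdef]; simp only [if_neg hw]
          exact Submodule.smul_mem _ _ (Submodule.subset_span ⟨b, rfl⟩)
      have hFsum : ∑ w : Fin r, F w = 0 := by
        rw [← Finset.add_sum_erase _ _ (Finset.mem_univ u0), hFdef]
        simp only [if_pos rfl]
        have hsplit : ∀ w' : Fin r, w' ∈ Finset.univ.erase u0 →
            (if w' = u0 then g u0 • S i b + ∑ w'' ∈ Finset.univ.erase u0,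
                g w'' • ∑ j ∈ X.erase i, (S i * C w'' j) b
             else g w' • (S i * C w' i) b) = g w' • (S i * C w' i) b := by
          intro w' hw'
          rw [if_neg (Finset.mem_erase.mp hw').1]
        rw [Finset.sum_congr rfl hsplit]
        have hm := hmain b
        have hXsplit : ∀ w' : Fin r,
            g w' • ∑ j ∈ X, (S i * C w' j) b
              = g w' • (S i * C w' i) b + g w' • ∑ j ∈ X.erase i, (S i * C w' j) b := by
          intro w'
          rw [← smul_add, ← Finset.add_sum_erase _ _ hi]
        rw [Finset.sum_congr rfl (fun w' _ => hXsplit w'), Finset.sum_add_distrib] at hm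
        rw [← hm]
        rw [if_pos trivial]
        abel
      have hvmem : F v ∈ V v := hFmem v
      have hvmem2 : F v ∈ ⨆ w, ⨆ (_ : w ≠ v), V w := by
        have hsum' : F v + ∑ w ∈ Finset.univ.erase v, F w = 0 := by
          rw [Finset.add_sum_erase _ _ (Finset.mem_univ v)]; exact hFsum
        have hFv : F v = -∑ w ∈ Finset.univ.erase v, F w := eq_neg_of_add_eq_zero_left hsum'
        rw [hFv]
        apply Submodule.neg_mem
        apply Submodule.sum_mem
        intro w hw
        have hwv : w ≠ v := (Finset.mem_erase.mp hw).1
        exact Submodule.mem_iSup_of_mem w (Submodule.mem_iSup_of_mem hwv (hFmem w))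
      have hFv0 : F v = 0 := Submodule.disjoint_def.mp (hIA2 i v) (F v) hvmem hvmem2
      rw [hFdef] at hFv0
      simpa [if_neg hv] using hFv0
    -- conclude S i * C v i = 0, hence S i = 0, contradiction
    have hmat : S i * C v i = 0 := by
      ext b c
      have := congrFun (hrowz b) c
      simp only [Pi.smul_apply, smul_eq_mul, Pi.zero_apply] at this
      rcases mul_eq_zero.mp this with h | h
      · exact absurd h hgv
      · simpa using h
    obtain ⟨U, hU⟩ := hCinv v i
    apply hS
    calc S i = S i * ((↑U : Matrix (Fin l) (Fin l) 𝔽) * (↑U⁻¹ : Matrix (Fin l) (Fin l) 𝔽)) := by rw [U.mul_inv, Matrix.mul_one]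
      _ = (S i * C v i) * (↑U⁻¹ : Matrix (Fin l) (Fin l) 𝔽) := by rw [← Matrix.mul_assoc, hU]
      _ = 0 := by rw [hmat, Matrix.zero_mul]
  -- finish: g u0 = 0 too
  have hgu0 : g u0 = 0 := by
    have hsum : ∑ w : Fin r, g w • (if (w : ℕ) = 0 then (1 : Matrix (Fin l) (Fin l) 𝔽)
        else ∑ j ∈ X, C w j) = g u0 • (1 : Matrix (Fin l) (Fin l) 𝔽) := by
      rw [← Finset.add_sum_erase _ _ (Finset.mem_univ u0), if_pos rfl,
        Finset.sum_eq_zero, add_zero]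
      intro w hw
      rw [hgz w (Finset.mem_erase.mp hw).1, zero_smul]
    rw [hsum] at hg
    have := congrFun (congrFun hg ⟨0, hl⟩) ⟨0, hl⟩
    simpa [Matrix.one_apply] using this
  intro v
  by_cases hv : v = u0
  · rw [hv]; exact hgu0
  · exact hgz v hv
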